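/- Let f : [a,b] → ℝ be continuously differentiable and x ∈ [a,b]. Define K(t,x) = t − a for t ∈ [a,x) and K(t,x) = t − b for t ∈ [x,b]. Then | f(x) − (1/(b−a))·∫_a^b f(t) dt − ((f(b)−f(a))/(b−a)²)·((x−a)²/2 − (x−b)²/2) | ≤ [ (1/(b−a))·∫_a^b K(t,x)² dt − ((1/(b−a))·∫_a^b K(t,x) dt)² ]^{1/2} · [ (1/(b−a))·∫_a^b f'(t)² dt − ((f(b)−f(a))/(b−a))² ]^{1/2}. -/

import Mathlib

open Set intervalIntegral
open MeasureTheory (volume ae_iff measure_singleton ae_restrict_of_ae ae_restrict_mem)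

lemma cs_interval_aux (a b : ℝ) (hab : a ≤ b) (g h : ℝ → ℝ)
    (hg2 : IntervalIntegrable (fun t => g t ^ 2) volume a b)
    (hh2 : IntervalIntegrable (fun t => h t ^ 2) volume a b)
    (hgh : IntervalIntegrable (fun t => g t * h t) volume a b) :
    (∫ t in a..b, g t * h t) ^ 2 ≤ (∫ t in a..b, g t ^ 2) * (∫ t in a..b, h t ^ 2) := by
  set A := ∫ t in a..b, g t ^ 2 with hA
  set B := ∫ t in a..b, g t * h t with hB
  set C := ∫ t in a..b, h t ^ 2 with hC
  have key : ∀ lam : ℝ, 0 ≤ A * (lam * lam) + (2 * B) * lam + C := by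
    intro lam
    have h1 : (fun t => (lam * g t + h t) ^ 2)
        = fun t => lam ^ 2 * g t ^ 2 + (2 * lam) * (g t * h t) + h t ^ 2 := by
      funext t; ring
    have hint : (∫ t in a..b, (lam * g t + h t) ^ 2)
        = lam ^ 2 * A + 2 * lam * B + C := by
      rw [h1, integral_add ((hg2.const_mul _).add (hgh.const_mul _)) hh2,
        integral_add (hg2.const_mul _) (hgh.const_mul _),
        integral_const_mul, integral_const_mul, ← hA, ← hB, ← hC]
    have hpos : 0 ≤ ∫ t in a..b, (lam * g t + h t) ^ 2 :=
      integral_nonneg hab fun t _ => sq_nonneg _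
    rw [hint] at hpos
    nlinarith [hpos]
  have hd := discrim_le_zero key
  rw [discrim] at hd
  nlinarith [hd]

theorem ostrowski_gruss_real
    (a b : ℝ) (hab : a < b) (f f' : ℝ → ℝ)
    (hf : ∀ t ∈ Set.Icc a b, HasDerivAt f (f' t) t)
    (hf'c : ContinuousOn f' (Set.Icc a b))
    (K : ℝ → ℝ → ℝ)
    (hK : ∀ x, ∀ t, K t x = if t < x then t - a else t - b) :
    ∀ x ∈ Set.Icc a b,
      |f x - (1 / (b - a)) * (∫ t in a..b, f t)
          - (f b - f a) / (b - a) ^ 2 * ((x - a) ^ 2 / 2 - (x - b) ^ 2 / 2)|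
        ≤ Real.sqrt ((1 / (b - a)) * (∫ t in a..b, (K t x) ^ 2)
              - ((1 / (b - a)) * ∫ t in a..b, K t x) ^ 2)
          * Real.sqrt ((1 / (b - a)) * (∫ t in a..b, (f' t) ^ 2)
              - ((f b - f a) / (b - a)) ^ 2) := by
  intro x hx
  obtain ⟨hax, hxb⟩ := hx
  have hba : (0:ℝ) < b - a := by linarith
  have hab' : a ≤ b := hab.le
  have huIcc : Set.uIcc a b = Set.Icc a b := Set.uIcc_of_le hab'
  have hux : Set.uIcc a x = Set.Icc a x := Set.uIcc_of_le hax
  have hxbI : Set.uIcc x b = Set.Icc x b := Set.uIcc_of_le hxb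
  -- continuity / integrability of f and f'
  have hf'cu : ContinuousOn f' (Set.uIcc a b) := by rw [huIcc]; exact hf'c
  have hf'i : IntervalIntegrable f' volume a b := hf'cu.intervalIntegrable
  have hf'iax : IntervalIntegrable f' volume a x :=
    hf'i.mono_set (by rw [hux, huIcc]; exact Set.Icc_subset_Icc le_rfl hxb)
  have hf'ixb : IntervalIntegrable f' volume x b :=
    hf'i.mono_set (by rw [hxbI, huIcc]; exact Set.Icc_subset_Icc hax le_rfl)
  have hfc : ContinuousOn f (Set.Icc a b) := fun t ht =>
    (hf t ht).continuousAt.continuousWithinAt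
  have hfi : IntervalIntegrable f volume a b := by
    apply ContinuousOn.intervalIntegrable; rw [huIcc]; exact hfc
  have hfiax : IntervalIntegrable f volume a x :=
    hfi.mono_set (by rw [hux, huIcc]; exact Set.Icc_subset_Icc le_rfl hxb)
  have hfixb : IntervalIntegrable f volume x b :=
    hfi.mono_set (by rw [hxbI, huIcc]; exact Set.Icc_subset_Icc hax le_rfl)
  -- a.e. avoidance of the point x
  have hxne : ∀ᵐ t : ℝ, t ≠ x := by
    rw [ae_iff]
    simp only [not_not, Set.setOf_eq_eq_singleton]
    exact measure_singleton x
  -- integrability of K and friends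
  have hIax : IntervalIntegrable (fun t => K t x) volume a x := by
    rw [intervalIntegrable_iff_integrableOn_Ioc_of_le hax]
    refine ((intervalIntegrable_iff_integrableOn_Ioc_of_le hax).mp
      ((continuous_sub_right a).intervalIntegrable a x)).congr ?_
    filter_upwards [ae_restrict_of_ae hxne, ae_restrict_mem measurableSet_Ioc] with t ht hmem
    rw [hK x t, if_pos (lt_of_le_of_ne hmem.2 ht)]
  have hIxb : IntervalIntegrable (fun t => K t x) volume x b := by
    rw [intervalIntegrable_iff_integrableOn_Ioc_of_le hxb]
    refine ((intervalIntegrable_iff_integrableOn_Ioc_of_le hxb).mp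
      ((continuous_sub_right b).intervalIntegrable x b)).congr ?_
    filter_upwards [ae_restrict_mem measurableSet_Ioc] with t hmem
    rw [hK x t, if_neg (not_lt.mpr hmem.1.le)]
  have hIK : IntervalIntegrable (fun t => K t x) volume a b := hIax.trans hIxb
  have hI2ax : IntervalIntegrable (fun t => (K t x) ^ 2) volume a x := by
    rw [intervalIntegrable_iff_integrableOn_Ioc_of_le hax]
    refine ((intervalIntegrable_iff_integrableOn_Ioc_of_le hax).mp
      (((continuous_sub_right a).pow 2).intervalIntegrable a x)).congr ?_
    filter_upwards [ae_restrict_of_ae hxne, ae_restrict_mem measurableSet_Ioc] with t ht hmem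
    rw [hK x t, if_pos (lt_of_le_of_ne hmem.2 ht)]; rfl
  have hI2xb : IntervalIntegrable (fun t => (K t x) ^ 2) volume x b := by
    rw [intervalIntegrable_iff_integrableOn_Ioc_of_le hxb]
    refine ((intervalIntegrable_iff_integrableOn_Ioc_of_le hxb).mp
      (((continuous_sub_right b).pow 2).intervalIntegrable x b)).congr ?_
    filter_upwards [ae_restrict_mem measurableSet_Ioc] with t hmem
    rw [hK x t, if_neg (not_lt.mpr hmem.1.le)]; rfl
  have hIK2 : IntervalIntegrable (fun t => (K t x) ^ 2) volume a b := hI2ax.trans hI2xb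
  have hf'cax : ContinuousOn f' (Set.uIcc a x) := by
    rw [hux]; exact hf'c.mono (Set.Icc_subset_Icc le_rfl hxb)
  have hf'cxb : ContinuousOn f' (Set.uIcc x b) := by
    rw [hxbI]; exact hf'c.mono (Set.Icc_subset_Icc hax le_rfl)
  have hIKfax : IntervalIntegrable (fun t => K t x * f' t) volume a x := by
    rw [intervalIntegrable_iff_integrableOn_Ioc_of_le hax]
    refine ((intervalIntegrable_iff_integrableOn_Ioc_of_le hax).mp
      (((continuous_sub_right a).intervalIntegrable a x).mul_continuousOn
        hf'cax)).congr ?_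
    filter_upwards [ae_restrict_of_ae hxne, ae_restrict_mem measurableSet_Ioc] with t ht hmem
    rw [hK x t, if_pos (lt_of_le_of_ne hmem.2 ht)]
  have hIKfxb : IntervalIntegrable (fun t => K t x * f' t) volume x b := by
    rw [intervalIntegrable_iff_integrableOn_Ioc_of_le hxb]
    refine ((intervalIntegrable_iff_integrableOn_Ioc_of_le hxb).mp
      (((continuous_sub_right b).intervalIntegrable x b).mul_continuousOn
        hf'cxb)).congr ?_
    filter_upwards [ae_restrict_mem measurableSet_Ioc] with t hmem
    rw [hK x t, if_neg (not_lt.mpr hmem.1.le)]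
  have hIKf : IntervalIntegrable (fun t => K t x * f' t) volume a b := hIKfax.trans hIKfxb
  -- value of ∫ K
  have hvK1 : ∫ t in a..x, K t x = (x - a) ^ 2 / 2 := by
    rw [integral_congr_ae (g := fun t => t - a) ?_]
    · rw [integral_sub intervalIntegrable_id intervalIntegrable_const,
        integral_id, integral_const]
      simp only [smul_eq_mul]; try ring
    · filter_upwards [hxne] with t ht hmem
      rw [Set.uIoc_of_le hax] at hmem
      rw [hK x t, if_pos (lt_of_le_of_ne hmem.2 ht)]
  have hvK2 : ∫ t in x..b, K t x = -((x - b) ^ 2 / 2) := by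
    rw [integral_congr (g := fun t => t - b) ?_]
    · rw [integral_sub intervalIntegrable_id intervalIntegrable_const,
        integral_id, integral_const]
      simp only [smul_eq_mul]; try ring
    · intro t ht
      rw [hxbI] at ht
      simp only
      rw [hK x t, if_neg (not_lt.mpr ht.1)]
  have hvK : ∫ t in a..b, K t x = (x - a) ^ 2 / 2 - (x - b) ^ 2 / 2 := by
    rw [← integral_add_adjacent_intervals hIax hIxb, hvK1, hvK2]; ring
  -- Montgomery identity
  have hM1 : ∫ t in a..x, K t x * f' t = (x - a) * f x - ∫ t in a..x, f t := by
    have hcongr : (∫ t in a..x, K t x * f' t) = ∫ t in a..x, (t - a) * f' t := by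
      apply integral_congr_ae
      filter_upwards [hxne] with t ht hmem
      rw [Set.uIoc_of_le hax] at hmem
      rw [hK x t, if_pos (lt_of_le_of_ne hmem.2 ht)]
    rw [hcongr]
    have hparts := integral_mul_deriv_eq_deriv_mul
      (u := fun t => t - a) (v := f) (u' := fun _ => (1:ℝ)) (v' := f')
      (fun t _ => (hasDerivAt_id t).sub_const a)
      (fun t ht => hf t (by rw [hux] at ht; exact ⟨ht.1, ht.2.trans hxb⟩))
      intervalIntegrable_const hf'iax
    rw [hparts]
    simp only [one_mul, sub_self, zero_mul, sub_zero]
  have hM2 : ∫ t in x..b, K t x * f' t = -((x - b) * f x) - ∫ t in x..b, f t := by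
    have hcongr : (∫ t in x..b, K t x * f' t) = ∫ t in x..b, (t - b) * f' t := by
      apply integral_congr
      intro t ht
      rw [hxbI] at ht
      simp only
      rw [hK x t, if_neg (not_lt.mpr ht.1)]
    rw [hcongr]
    have hparts := integral_mul_deriv_eq_deriv_mul
      (u := fun t => t - b) (v := f) (u' := fun _ => (1:ℝ)) (v' := f')
      (fun t _ => (hasDerivAt_id t).sub_const b)
      (fun t ht => hf t (by rw [hxbI] at ht; exact ⟨hax.trans ht.1, ht.2⟩))
      intervalIntegrable_const hf'ixb
    rw [hparts]
    simp only [one_mul, sub_self, zero_mul]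
    ring
  have hMf : ∫ t in a..b, K t x * f' t = (b - a) * f x - ∫ t in a..b, f t := by
    rw [← integral_add_adjacent_intervals hIKfax hIKfxb, hM1, hM2,
      ← integral_add_adjacent_intervals hfiax hfixb]
    ring
  -- FTC
  have hFTC : ∫ t in a..b, f' t = f b - f a :=
    integral_eq_sub_of_hasDerivAt (fun t ht => hf t (huIcc ▸ ht)) hf'i
  -- abbreviations
  set P := ∫ t in a..b, K t x with hP
  set Q := ∫ t in a..b, (K t x) ^ 2 with hQ
  set R := ∫ t in a..b, K t x * f' t with hR
  set F2 := ∫ t in a..b, (f' t) ^ 2 with hF2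
  set IF := ∫ t in a..b, f t with hIF
  set m : ℝ := P / (b - a) with hm
  set c : ℝ := (f b - f a) / (b - a) with hc
  -- integrability of centered functions
  have hg2i : IntervalIntegrable (fun t => (K t x - m) ^ 2) volume a b := by
    have e : (fun t => (K t x - m) ^ 2)
        = fun t => ((K t x) ^ 2 - (2 * m) * K t x) + m ^ 2 := by funext t; ring
    rw [e]; exact (hIK2.sub (hIK.const_mul _)).add intervalIntegrable_const
  have hh2i : IntervalIntegrable (fun t => (f' t - c) ^ 2) volume a b := by
    apply ContinuousOn.intervalIntegrable
    exact (hf'cu.sub continuousOn_const).pow 2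
  have hghi : IntervalIntegrable (fun t => (K t x - m) * (f' t - c)) volume a b := by
    have e : (fun t => (K t x - m) * (f' t - c))
        = fun t => (K t x * f' t - c * K t x) - (m * f' t - m * c) := by funext t; ring
    rw [e]
    exact (hIKf.sub (hIK.const_mul _)).sub ((hf'i.const_mul _).sub intervalIntegrable_const)
  -- values of centered integrals
  have hA : ∫ t in a..b, (K t x - m) ^ 2 = Q - 2 * m * P + (b - a) * m ^ 2 := by
    have e : (fun t => (K t x - m) ^ 2)
        = fun t => ((K t x) ^ 2 - (2 * m) * K t x) + m ^ 2 := by funext t; ring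
    rw [e, integral_add (hIK2.sub (hIK.const_mul _)) intervalIntegrable_const,
      integral_sub hIK2 (hIK.const_mul _), integral_const_mul, integral_const, ← hQ, ← hP]
    simp only [smul_eq_mul]; try ring
  have hC : ∫ t in a..b, (f' t - c) ^ 2 = F2 - 2 * c * (f b - f a) + (b - a) * c ^ 2 := by
    have e : (fun t => (f' t - c) ^ 2)
        = fun t => ((f' t) ^ 2 - (2 * c) * f' t) + c ^ 2 := by funext t; ring
    have hf'2i : IntervalIntegrable (fun t => (f' t) ^ 2) volume a b := by
      apply ContinuousOn.intervalIntegrable; exact hf'cu.pow 2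
    rw [e, integral_add (hf'2i.sub (hf'i.const_mul _)) intervalIntegrable_const,
      integral_sub hf'2i (hf'i.const_mul _), integral_const_mul, integral_const, hFTC, ← hF2]
    simp only [smul_eq_mul]; try ring
  have hB : ∫ t in a..b, (K t x - m) * (f' t - c)
      = R - c * P - m * (f b - f a) + (b - a) * (m * c) := by
    have e : (fun t => (K t x - m) * (f' t - c))
        = fun t => (K t x * f' t - c * K t x) - (m * f' t - m * c) := by funext t; ring
    rw [e, integral_sub (hIKf.sub (hIK.const_mul _))
        ((hf'i.const_mul _).sub intervalIntegrable_const),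
      integral_sub hIKf (hIK.const_mul _),
      integral_sub (hf'i.const_mul _) intervalIntegrable_const,
      integral_const_mul, integral_const_mul, integral_const, hFTC, ← hR, ← hP]
    simp only [smul_eq_mul]; try ring
  -- Cauchy–Schwarz
  have hCS := cs_interval_aux a b hab' (fun t => K t x - m) (fun t => f' t - c)
    hg2i hh2i hghi
  -- rewrite goal
  have hLHS : f x - 1 / (b - a) * IF
      - (f b - f a) / (b - a) ^ 2 * ((x - a) ^ 2 / 2 - (x - b) ^ 2 / 2)
      = (∫ t in a..b, (K t x - m) * (f' t - c)) / (b - a) := by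
    rw [hB, hMf, ← hvK, hm, hc]
    field_simp
    ring
  have hRHS1 : 1 / (b - a) * Q - (1 / (b - a) * P) ^ 2
      = (∫ t in a..b, (K t x - m) ^ 2) / (b - a) := by
    rw [hA, hm]; field_simp; ring
  have hRHS2 : 1 / (b - a) * F2 - ((f b - f a) / (b - a)) ^ 2
      = (∫ t in a..b, (f' t - c) ^ 2) / (b - a) := by
    rw [hC, hc]; field_simp; ring
  rw [hLHS, hRHS1, hRHS2]
  set A' := ∫ t in a..b, (K t x - m) ^ 2 with hA'
  set B' := ∫ t in a..b, (K t x - m) * (f' t - c) with hB'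
  set C' := ∫ t in a..b, (f' t - c) ^ 2 with hC'
  have hA0 : 0 ≤ A' := integral_nonneg hab' fun t _ => sq_nonneg _
  have hC0 : 0 ≤ C' := integral_nonneg hab' fun t _ => sq_nonneg _
  calc |B' / (b - a)| = Real.sqrt ((B' / (b - a)) ^ 2) := (Real.sqrt_sq_eq_abs _).symm
    _ ≤ Real.sqrt (A' / (b - a) * (C' / (b - a))) := by
        apply Real.sqrt_le_sqrt
        rw [div_pow, div_mul_div_comm, ← sq (b - a)]
        gcongr
    _ = Real.sqrt (A' / (b - a)) * Real.sqrt (C' / (b - a)) :=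
        Real.sqrt_mul (div_nonneg hA0 hba.le) _
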